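/- arXiv:1001.1663 — 3 statements merged into one kernel-verified Lean document; each statement's English description precedes it below -/
import Mathlib

section
/- A finite co-Heyting algebra L satisfies both the identity (⊤ \ x) ⊓ (⊤ \ (⊤ \ x)) = ⊥ and the identity (((⊤ \ x) ⊓ x) \ y) ⊓ y = ⊥ (for all x, y) if and only if L embeds as a co-Heyting algebra into a finite direct power of the three-element chain L₃ = {⊥ < c < ⊤}. -/
/-- `Ll b a` means `b ≪ a`: `a \ b = a` and `b ≤ a`. -/
def Ll {L : Type*} [CoheytingAlgebra L] (b a : L) : Prop := a \ b = a ∧ b ≤ a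

/-- An embedding of co-Heyting algebras: injective and preserving `⊥`, `⊤`, `⊔`, `⊓`, `\`. -/
def IsCoheytingEmb {K L : Type*} [CoheytingAlgebra K] [CoheytingAlgebra L] (f : K → L) : Prop :=
  Function.Injective f ∧ f ⊥ = ⊥ ∧ f ⊤ = ⊤ ∧
    (∀ a b, f (a ⊔ b) = f a ⊔ f b) ∧ (∀ a b, f (a ⊓ b) = f a ⊓ f b) ∧
    (∀ a b, f (a \ b) = f a \ f b)

section Aux

open Classical in
/-- A "co-Heyting hom into the three chain" predicate. -/
private def IsHom3 {L : Type*} [CoheytingAlgebra L] (h : L → Fin 3) : Prop :=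
  h ⊥ = ⊥ ∧ h ⊤ = ⊤ ∧ (∀ a b, h (a ⊔ b) = h a ⊔ h b) ∧
    (∀ a b, h (a ⊓ b) = h a ⊓ h b) ∧ (∀ a b, h (a \ b) = h a \ h b)

variable {L : Type*} [CoheytingAlgebra L] [Finite L]

private lemma sdiff_char {m a b : L} (hm : SupPrime m) :
    m ≤ a \ b ↔ ∃ k : L, SupPrime k ∧ m ≤ k ∧ k ≤ a ∧ ¬ k ≤ b := by
  classical
  constructor
  · intro hle
    obtain ⟨s, hsup, hirr⟩ := exists_supIrred_decomposition (a \ b)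
    set e := (s.filter (fun k => ¬ k ≤ b)).sup id with he
    have hde : a \ b ≤ e := by
      have h1 : a \ b ≤ b ⊔ e := by
        conv_lhs => rw [← hsup]
        refine Finset.sup_le ?_
        intro k hk
        by_cases hkb : k ≤ b
        · exact le_sup_of_le_left hkb
        · exact le_sup_of_le_right (Finset.le_sup (f := id) (Finset.mem_filter.2 ⟨hk, hkb⟩))
      calc a \ b = (a \ b) \ b := sdiff_idem.symm
        _ ≤ e := sdiff_le_iff.2 h1
    obtain ⟨k, hkmem, hmk⟩ := hm.le_finset_sup.1 (hle.trans hde)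
    obtain ⟨hks, hkb⟩ := Finset.mem_filter.1 hkmem
    refine ⟨k, (hirr hks).supPrime, hmk, ?_, hkb⟩
    exact le_trans (le_trans (Finset.le_sup (f := id) hks) hsup.le) sdiff_le
  · rintro ⟨k, hk, hmk, hka, hkb⟩
    have h2 : k ≤ b ⊔ a \ b := hka.trans le_sup_sdiff
    rcases hk.le_sup.1 h2 with h | h
    · exact absurd h hkb
    · exact hmk.trans h

private lemma max_of_lt (id2 : ∀ x y : L, (((⊤ \ x) ⊓ x) \ y) ⊓ y = ⊥)
    {j k : L} (hj : SupPrime j) (hk : SupPrime k) (hjk : j < k) :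
    ∀ k' : L, SupPrime k' → k ≤ k' → k' = k := by
  intro k' hk' hkk'
  by_contra hne
  have hlt : k < k' := lt_of_le_of_ne hkk' (Ne.symm hne)
  have h1 : k ≤ ⊤ \ k := by
    have h2 : k' ≤ k ⊔ ⊤ \ k := le_top.trans le_sup_sdiff
    rcases hk'.le_sup.1 h2 with h | h
    · exact absurd h hlt.not_ge
    · exact hlt.le.trans h
  have hjz : j ≤ ((⊤ \ k) ⊓ k) \ j :=
    (sdiff_char hj).2 ⟨k, hk, hjk.le, le_inf h1 le_rfl, hjk.not_ge⟩
  have hfin : j ≤ (((⊤ \ k) ⊓ k) \ j) ⊓ j := le_inf hjz le_rfl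
  rw [id2] at hfin
  exact hj.ne_bot (le_bot_iff.1 hfin)

private lemma unique_above (id1 : ∀ x : L, (⊤ \ x) ⊓ (⊤ \ (⊤ \ x)) = ⊥)
    (id2 : ∀ x y : L, (((⊤ \ x) ⊓ x) \ y) ⊓ y = ⊥)
    {j k1 k2 : L} (hj : SupPrime j) (hk1 : SupPrime k1) (hk2 : SupPrime k2)
    (h1 : j < k1) (h2 : j < k2) : k1 = k2 := by
  by_contra hne
  have hm1 := max_of_lt id2 hj hk1 h1
  have hm2 := max_of_lt id2 hj hk2 h2
  have ha : j ≤ ⊤ \ k1 := by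
    have ht : k2 ≤ k1 ⊔ ⊤ \ k1 := le_top.trans le_sup_sdiff
    rcases hk2.le_sup.1 ht with h | h
    · exact absurd (hm2 k1 hk1 h) hne
    · exact h2.le.trans h
  have hb : j ≤ ⊤ \ (⊤ \ k1) := by
    have ht : k1 ≤ (⊤ \ k1) ⊔ (⊤ \ (⊤ \ k1)) := le_top.trans le_sup_sdiff
    rcases hk1.le_sup.1 ht with h | h
    · have h' : k1 ≤ (⊤ \ k1) \ k1 := by rw [sdiff_idem]; exact h
      obtain ⟨k, hk, hk1k, _, hkk1⟩ := (sdiff_char hk1).1 h'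
      exact absurd (le_of_eq (hm1 k hk hk1k)) hkk1
    · exact h1.le.trans h
  have hfin : j ≤ (⊤ \ k1) ⊓ (⊤ \ (⊤ \ k1)) := le_inf ha hb
  rw [id1] at hfin
  exact hj.ne_bot (le_bot_iff.1 hfin)

open Classical in
private lemma hom_of_max {j : L} (hj : SupPrime j)
    (hmax : ∀ k, SupPrime k → j ≤ k → k = j) :
    IsHom3 (fun a => if j ≤ a then (2 : Fin 3) else 0) := by
  have key : ∀ a b : L, (j ≤ a \ b) ↔ (j ≤ a ∧ ¬ j ≤ b) := by
    intro a b
    constructor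
    · intro h
      obtain ⟨k, hk, hjk, hka, hkb⟩ := (sdiff_char hj).1 h
      have := hmax k hk hjk; subst this
      exact ⟨hka, hkb⟩
    · rintro ⟨h1, h2⟩
      exact (sdiff_char hj).2 ⟨j, hj, le_rfl, h1, h2⟩
  refine ⟨?_, ?_, ?_, ?_, ?_⟩
  · simp only [le_bot_iff, hj.ne_bot, if_false]; decide
  · simp only [le_top, if_true]; decide
  · intro a b
    by_cases ha : j ≤ a <;> by_cases hb : j ≤ b <;>
      simp only [hj.le_sup, ha, hb, true_or, or_true, or_self, if_true, if_false] <;> decide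
  · intro a b
    by_cases ha : j ≤ a <;> by_cases hb : j ≤ b <;>
      simp only [le_inf_iff, ha, hb, true_and, and_true, and_self, false_and, and_false,
        if_true, if_false] <;> decide
  · intro a b
    by_cases ha : j ≤ a <;> by_cases hb : j ≤ b <;>
      simp only [key, ha, hb, true_and, and_true, and_self, false_and, and_false,
        not_true, not_false_iff, if_true, if_false] <;> decide

open Classical in
private lemma hom_of_pair {j k : L} (hj : SupPrime j) (hk : SupPrime k) (hjk : j < k)
    (hmaxk : ∀ k', SupPrime k' → k ≤ k' → k' = k)
    (huniq : ∀ k', SupPrime k' → j ≤ k' → k' = j ∨ k' = k) :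
    IsHom3 (fun a => if k ≤ a then (2 : Fin 3) else if j ≤ a then 1 else 0) := by
  have keyk : ∀ a b : L, (k ≤ a \ b) ↔ (k ≤ a ∧ ¬ k ≤ b) := by
    intro a b
    constructor
    · intro h
      obtain ⟨k', hk', hkk', hka, hkb⟩ := (sdiff_char hk).1 h
      have := hmaxk k' hk' hkk'; subst this
      exact ⟨hka, hkb⟩
    · rintro ⟨h1, h2⟩
      exact (sdiff_char hk).2 ⟨k, hk, le_rfl, h1, h2⟩
  have keyj : ∀ a b : L, (j ≤ a \ b) ↔ ((j ≤ a ∧ ¬ j ≤ b) ∨ (k ≤ a ∧ ¬ k ≤ b)) := by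
    intro a b
    constructor
    · intro h
      obtain ⟨k', hk', hjk', hka, hkb⟩ := (sdiff_char hj).1 h
      rcases huniq k' hk' hjk' with h' | h' <;> subst h'
      · exact Or.inl ⟨hka, hkb⟩
      · exact Or.inr ⟨hka, hkb⟩
    · rintro (⟨h1, h2⟩ | ⟨h1, h2⟩)
      · exact (sdiff_char hj).2 ⟨j, hj, le_rfl, h1, h2⟩
      · exact (sdiff_char hj).2 ⟨k, hk, hjk.le, h1, h2⟩
  have hmono : ∀ a : L, k ≤ a → j ≤ a := fun a h => hjk.le.trans h
  refine ⟨?_, ?_, ?_, ?_, ?_⟩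
  · simp only [le_bot_iff, hj.ne_bot, hk.ne_bot, if_false]; decide
  · simp only [le_top, if_true]; decide
  · intro a b
    by_cases hka : k ≤ a <;> by_cases hkb : k ≤ b <;> by_cases hja : j ≤ a <;>
        by_cases hjb : j ≤ b <;>
      first
      | (exact absurd (hmono a ‹k ≤ a›) ‹¬ j ≤ a›)
      | (exact absurd (hmono b ‹k ≤ b›) ‹¬ j ≤ b›)
      | (simp only [hk.le_sup, hj.le_sup, hka, hkb, hja, hjb, true_or, or_true, or_self,
          false_or, or_false, if_true, if_false] <;> decide)
  · intro a b
    by_cases hka : k ≤ a <;> by_cases hkb : k ≤ b <;> by_cases hja : j ≤ a <;>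
        by_cases hjb : j ≤ b <;>
      first
      | (exact absurd (hmono a ‹k ≤ a›) ‹¬ j ≤ a›)
      | (exact absurd (hmono b ‹k ≤ b›) ‹¬ j ≤ b›)
      | (simp only [le_inf_iff, hka, hkb, hja, hjb, true_and, and_true, and_self, false_and,
          and_false, if_true, if_false] <;> decide)
  · intro a b
    by_cases hka : k ≤ a <;> by_cases hkb : k ≤ b <;> by_cases hja : j ≤ a <;>
        by_cases hjb : j ≤ b <;>
      first
      | (exact absurd (hmono a ‹k ≤ a›) ‹¬ j ≤ a›)
      | (exact absurd (hmono b ‹k ≤ b›) ‹¬ j ≤ b›)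
      | (simp only [keyk, keyj, hka, hkb, hja, hjb, true_and, and_true, and_self, false_and,
          and_false, not_true, not_false_iff, true_or, or_true, or_self, false_or, or_false,
          if_true, if_false] <;> decide)

private lemma exists_hom_sep (id1 : ∀ x : L, (⊤ \ x) ⊓ (⊤ \ (⊤ \ x)) = ⊥)
    (id2 : ∀ x y : L, (((⊤ \ x) ⊓ x) \ y) ⊓ y = ⊥)
    {a b : L} (hab : ¬ a ≤ b) : ∃ h : L → Fin 3, IsHom3 h ∧ h a ≠ h b := by
  classical
  obtain ⟨s, hsup, hirr⟩ := exists_supIrred_decomposition a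
  have hex : ∃ j ∈ s, ¬ j ≤ b := by
    by_contra h
    push_neg at h
    exact hab (hsup ▸ Finset.sup_le (fun i hi => h i hi))
  obtain ⟨j, hjs, hjb⟩ := hex
  have hj : SupPrime j := (hirr hjs).supPrime
  have hja : j ≤ a := hsup ▸ Finset.le_sup (f := id) hjs
  by_cases hmax : ∀ k, SupPrime k → j ≤ k → k = j
  · refine ⟨_, hom_of_max hj hmax, ?_⟩
    simp only [hja, hjb, if_true, if_false]
    decide
  · push_neg at hmax
    obtain ⟨k, hk, hjk, hne⟩ := hmax
    have hlt : j < k := lt_of_le_of_ne hjk (fun e => hne e.symm)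
    have hmaxk := max_of_lt id2 hj hk hlt
    have huniq : ∀ k', SupPrime k' → j ≤ k' → k' = j ∨ k' = k := by
      intro k' hk' hjk'
      rcases eq_or_lt_of_le hjk' with h | h
      · exact Or.inl h.symm
      · exact Or.inr (unique_above id1 id2 hj hk' hk h hlt)
    have hkb : ¬ k ≤ b := fun h => hjb (hlt.le.trans h)
    refine ⟨_, hom_of_pair hj hk hlt hmaxk huniq, ?_⟩
    by_cases hka : k ≤ a <;>
      simp only [hka, hja, hjb, hkb, if_true, if_false] <;> decide

end Aux

theorem V5_iff_embeds_in_power_of_three_chain (L : Type*) [CoheytingAlgebra L] [Finite L] :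
    ((∀ x : L, (⊤ \ x) ⊓ (⊤ \ (⊤ \ x)) = ⊥) ∧
     (∀ x y : L, (((⊤ \ x) ⊓ x) \ y) ⊓ y = ⊥)) ↔
    ∃ (n : ℕ) (f : L → (Fin n → Fin 3)), IsCoheytingEmb f := by
  constructor
  · rintro ⟨id1, id2⟩
    classical
    have : Fintype L := Fintype.ofFinite L
    have : Fintype {h : L → Fin 3 // IsHom3 h} := Fintype.ofFinite _
    set S := {h : L → Fin 3 // IsHom3 h} with hS
    let e : S ≃ Fin (Fintype.card S) := Fintype.equivFin S
    refine ⟨Fintype.card S, fun a i => (e.symm i).1 a, ?_, ?_, ?_, ?_, ?_, ?_⟩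
    · intro a b hfab
      by_contra hne
      have hkey : ∀ h : L → Fin 3, IsHom3 h → h a = h b := by
        intro h hh
        have := congrFun hfab (e ⟨h, hh⟩)
        simpa using this
      have hor : ¬ a ≤ b ∨ ¬ b ≤ a := by
        by_contra h
        push_neg at h
        exact hne (le_antisymm h.1 h.2)
      rcases hor with h | h
      · obtain ⟨h3, hh3, hne3⟩ := exists_hom_sep id1 id2 h
        exact hne3 (hkey h3 hh3)
      · obtain ⟨h3, hh3, hne3⟩ := exists_hom_sep id1 id2 h
        exact hne3 (hkey h3 hh3).symm
    · funext i; exact (e.symm i).2.1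
    · funext i; exact (e.symm i).2.2.1
    · intro a b; funext i; exact (e.symm i).2.2.2.1 a b
    · intro a b; funext i; exact (e.symm i).2.2.2.2.1 a b
    · intro a b; funext i; exact (e.symm i).2.2.2.2.2 a b
  · rintro ⟨n, f, hinj, hbot, htop, hsup, hinf, hsd⟩
    constructor
    · intro x
      apply hinj
      simp only [hinf, hsd, htop, hbot]
      funext i
      exact (by decide : ∀ u : Fin 3, (⊤ \ u) ⊓ (⊤ \ (⊤ \ u)) = ⊥) (f x i)
    · intro x y
      apply hinj
      simp only [hinf, hsd, htop, hbot]
      funext i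
      exact (by decide : ∀ u v : Fin 3, (((⊤ \ u) ⊓ u) \ v) ⊓ v = ⊥) (f x i) (f y i)
end

section
/- A finite co-Heyting algebra L satisfies the identity (x \ y) ⊓ (y \ x) = ⊥ for all x, y if and only if L embeds as a co-Heyting algebra into a finite direct product of finite chains. -/
section Aux

variable {L : Type*} [CoheytingAlgebra L] [Finite L]

/-- Separation: if `x ≰ y` there is a sup-irreducible below `x` but not below `y`. -/
lemma aux_sep {x y : L} (h : ¬ x ≤ y) : ∃ p : L, SupIrred p ∧ p ≤ x ∧ ¬ p ≤ y := by
  obtain ⟨s, hs, hirr⟩ := exists_supIrred_decomposition x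
  by_contra hc
  push_neg at hc
  apply h
  rw [← hs]
  exact Finset.sup_le fun p hp => hc p (hirr hp) (by rw [← hs]; exact Finset.le_sup (f := id) hp)

/-- In a linear-order co-Heyting algebra, if `¬ a ≤ b` then `a \ b = a`. -/
lemma aux_lin_sdiff {K : Type*} [CoheytingAlgebra K] [IsTotal K (· ≤ ·)]
    {a b : K} (h : ¬ a ≤ b) : a \ b = a := by
  rcases total_of (· ≤ ·) b (a \ b) with h1 | h1
  · rcases le_sup_sdiff (a := b) (b := a) |>.trans (sup_le h1 le_rfl) |> fun h2 =>
      le_antisymm sdiff_le h2 with h3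
    exact h3.symm ▸ rfl
  · exfalso
    exact h (le_sup_sdiff.trans (sup_le le_rfl h1))

omit [Finite L] in
/-- Under V6, two sup-irreducibles above a common sup-irreducible are comparable. -/
lemma aux_comparable (hV6 : ∀ x y : L, (x \ y) ⊓ (y \ x) = ⊥)
    {p q r : L} (hp : SupIrred p) (hq : SupIrred q) (hr : SupIrred r)
    (hpq : p ≤ q) (hpr : p ≤ r) : q ≤ r ∨ r ≤ q := by
  by_contra hcon
  push_neg at hcon
  obtain ⟨h1, h2⟩ := hcon
  have hq' := hq.supPrime
  have hr' := hr.supPrime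
  have e1 : q \ r = q := by
    rcases hq'.le_sup.1 (le_sup_sdiff (a := r) (b := q)) with h | h
    · exact absurd h h1
    · exact le_antisymm sdiff_le h
  have e2 : r \ q = r := by
    rcases hr'.le_sup.1 (le_sup_sdiff (a := q) (b := r)) with h | h
    · exact absurd h h2
    · exact le_antisymm sdiff_le h
  have hbot : q ⊓ r = ⊥ := by
    have := hV6 q r
    rwa [e1, e2] at this
  exact hp.ne_bot (le_bot_iff.1 (hbot ▸ le_inf hpq hpr))

/-- If a sup-irreducible `q` is below `x \ y`, there is a sup-irreducible `m ≥ q`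
with `m ≤ x` and `m ≰ y`. -/
lemma aux_claim {q x y : L} (hq : SupIrred q) (h : q ≤ x \ y) :
    ∃ m : L, SupIrred m ∧ q ≤ m ∧ m ≤ x ∧ ¬ m ≤ y := by
  classical
  haveI : Fintype L := Fintype.ofFinite L
  set T : Finset L := Finset.univ.filter (fun m => SupIrred m ∧ m ≤ x ∧ ¬ q ≤ m) with hT
  by_cases hx : x ≤ y ⊔ T.sup id
  · exfalso
    have hqc : q ≤ T.sup id := le_trans h (sdiff_le_iff.2 hx)
    obtain ⟨m, hm, hqm⟩ := (hq.supPrime.le_finset_sup).1 hqc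
    obtain ⟨-, -, -, hnq⟩ := Finset.mem_filter.1 hm
    exact hnq hqm
  · obtain ⟨m, hm, hmx, hmN⟩ := aux_sep hx
    refine ⟨m, hm, ?_, hmx, fun hmy => hmN (le_sup_of_le_left hmy)⟩
    by_contra hqm
    exact hmN (le_sup_of_le_right
      (Finset.le_sup (f := id) (Finset.mem_filter.2 ⟨Finset.mem_univ m, hm, hmx, hqm⟩)))

end Aux

theorem V6_iff_embeds_in_product_of_chains (L : Type*) [CoheytingAlgebra L] [Finite L] :
    (∀ x y : L, (x \ y) ⊓ (y \ x) = ⊥) ↔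
    ∃ (n : ℕ) (k : Fin n → ℕ) (f : L → ∀ i, Fin (k i + 1)), IsCoheytingEmb f := by
  constructor
  · intro hV6
    classical
    haveI : Fintype L := Fintype.ofFinite L
    set J : Finset L := Finset.univ.filter SupIrred with hJ
    set S : L → L → Finset L :=
      fun p x => Finset.univ.filter (fun q => SupIrred q ∧ p ≤ q ∧ q ≤ x) with hS
    have memS : ∀ p x q : L, q ∈ S p x ↔ SupIrred q ∧ p ≤ q ∧ q ≤ x := by
      intro p x q; simp [hS]
    have mono : ∀ (p : L) {x y : L}, x ≤ y → S p x ⊆ S p y := by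
      intro p x y hxy q hqm
      rw [memS] at hqm ⊢
      exact ⟨hqm.1, hqm.2.1, hqm.2.2.trans hxy⟩
    have nested : ∀ {p : L}, SupIrred p → ∀ x y : L, S p x ⊆ S p y ∨ S p y ⊆ S p x := by
      intro p hp x y
      by_contra hcon
      push_neg at hcon
      obtain ⟨h1, h2⟩ := hcon
      obtain ⟨a, ha, hay⟩ := Finset.not_subset.1 h1
      obtain ⟨b, hb, hbx⟩ := Finset.not_subset.1 h2
      rw [memS] at ha hb
      have hcmp := aux_comparable hV6 hp ha.1 hb.1 ha.2.1 hb.2.1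
      rcases hcmp with h | h
      · exact hay ((memS p y a).2 ⟨ha.1, ha.2.1, h.trans hb.2.2⟩)
      · exact hbx ((memS p x b).2 ⟨hb.1, hb.2.1, h.trans ha.2.2⟩)
    -- index
    set e : Fin J.card ≃ J := J.equivFin.symm with he
    set pI : Fin J.card → L := fun i => (e i : L) with hpI
    have hpIirr : ∀ i, SupIrred (pI i) := by
      intro i
      exact (Finset.mem_filter.1 (e i).2).2
    have cardle : ∀ (i : Fin J.card) (x : L), (S (pI i) x).card ≤ (S (pI i) ⊤).card :=
      fun i x => Finset.card_le_card (mono _ le_top)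
    refine ⟨J.card, fun i => (S (pI i) ⊤).card,
      fun x i => ⟨(S (pI i) x).card, Nat.lt_succ_of_le (cardle i x)⟩, ?_, ?_, ?_, ?_, ?_, ?_⟩
    -- injectivity
    · have key : ∀ x y : L,
          (fun i => (⟨(S (pI i) x).card, Nat.lt_succ_of_le (cardle i x)⟩ : Fin _))
            = (fun i => ⟨(S (pI i) y).card, Nat.lt_succ_of_le (cardle i y)⟩) → x ≤ y := by
        intro x y hf
        by_contra hxy
        obtain ⟨p, hp, hpx, hpy⟩ := aux_sep hxy
        have hpJ : p ∈ J := by rw [hJ, Finset.mem_filter]; exact ⟨Finset.mem_univ p, hp⟩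
        set i : Fin J.card := J.equivFin ⟨p, hpJ⟩ with hi
        have hpi : pI i = p := by
          rw [hpI, he, hi]
          simp
        have hpmx : p ∈ S (pI i) x := (memS _ x p).2 ⟨hp, hpi ▸ le_rfl, hpx⟩
        have hpmy : p ∉ S (pI i) y := by
          intro hmem
          exact hpy ((memS _ y p).1 hmem).2.2
        have hsub : S (pI i) y ⊆ S (pI i) x := by
          rcases nested (hpIirr i) x y with h | h
          · exact absurd (h hpmx) hpmy
          · exact h
        have hlt : (S (pI i) y).card < (S (pI i) x).card :=
          Finset.card_lt_card (Finset.ssubset_iff_of_subset hsub |>.2 ⟨p, hpmx, hpmy⟩)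
        have := congrFun hf i
        rw [Fin.mk.injEq] at this
        omega
      intro x y hf
      exact le_antisymm (key x y hf) (key y x hf.symm)
    -- bot
    · funext i
      have hempty : S (pI i) ⊥ = ∅ := by
        rw [Finset.eq_empty_iff_forall_notMem]
        intro q hq
        obtain ⟨hqi, -, hqb⟩ := (memS _ ⊥ q).1 hq
        exact hqi.ne_bot (le_bot_iff.1 hqb)
      apply Fin.ext
      show (S (pI i) ⊥).card = ((⊥ : Fin _) : ℕ)
      rw [hempty]
      rfl
    -- top
    · funext i
      apply Fin.ext
      rfl
    -- sup
    · intro a b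
      funext i
      rcases nested (hpIirr i) a b with hsub | hsub
      · have hSeq : S (pI i) (a ⊔ b) = S (pI i) b := by
          apply Finset.Subset.antisymm
          · intro q hq
            obtain ⟨hqi, hpq, hqab⟩ := (memS _ _ q).1 hq
            rcases hqi.supPrime.le_sup.1 hqab with h | h
            · exact hsub ((memS _ a q).2 ⟨hqi, hpq, h⟩)
            · exact (memS _ b q).2 ⟨hqi, hpq, h⟩
          · exact mono _ le_sup_right
        have hle : (⟨(S (pI i) a).card, Nat.lt_succ_of_le (cardle i a)⟩ : Fin _)
            ≤ ⟨(S (pI i) b).card, Nat.lt_succ_of_le (cardle i b)⟩ :=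
          Fin.mk_le_mk.2 (Finset.card_le_card hsub)
        show (⟨(S (pI i) (a ⊔ b)).card, _⟩ : Fin _) = _ ⊔ _
        rw [sup_eq_right.2 hle]
        exact Fin.ext (congrArg Finset.card hSeq)
      · have hSeq : S (pI i) (a ⊔ b) = S (pI i) a := by
          apply Finset.Subset.antisymm
          · intro q hq
            obtain ⟨hqi, hpq, hqab⟩ := (memS _ _ q).1 hq
            rcases hqi.supPrime.le_sup.1 hqab with h | h
            · exact (memS _ a q).2 ⟨hqi, hpq, h⟩
            · exact hsub ((memS _ b q).2 ⟨hqi, hpq, h⟩)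
          · exact mono _ le_sup_left
        have hle : (⟨(S (pI i) b).card, Nat.lt_succ_of_le (cardle i b)⟩ : Fin _)
            ≤ ⟨(S (pI i) a).card, Nat.lt_succ_of_le (cardle i a)⟩ :=
          Fin.mk_le_mk.2 (Finset.card_le_card hsub)
        show (⟨(S (pI i) (a ⊔ b)).card, _⟩ : Fin _) = _ ⊔ _
        rw [sup_eq_left.2 hle]
        exact Fin.ext (congrArg Finset.card hSeq)
    -- inf
    · intro a b
      funext i
      rcases nested (hpIirr i) a b with hsub | hsub
      · have hSeq : S (pI i) (a ⊓ b) = S (pI i) a := by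
          apply Finset.Subset.antisymm
          · exact mono _ inf_le_left
          · intro q hq
            obtain ⟨hqi, hpq, hqa⟩ := (memS _ a q).1 hq
            have hqb := ((memS _ b q).1 (hsub hq)).2.2
            exact (memS _ _ q).2 ⟨hqi, hpq, le_inf hqa hqb⟩
        have hle : (⟨(S (pI i) a).card, Nat.lt_succ_of_le (cardle i a)⟩ : Fin _)
            ≤ ⟨(S (pI i) b).card, Nat.lt_succ_of_le (cardle i b)⟩ :=
          Fin.mk_le_mk.2 (Finset.card_le_card hsub)
        show (⟨(S (pI i) (a ⊓ b)).card, _⟩ : Fin _) = _ ⊓ _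
        rw [inf_eq_left.2 hle]
        exact Fin.ext (congrArg Finset.card hSeq)
      · have hSeq : S (pI i) (a ⊓ b) = S (pI i) b := by
          apply Finset.Subset.antisymm
          · exact mono _ inf_le_right
          · intro q hq
            obtain ⟨hqi, hpq, hqb⟩ := (memS _ b q).1 hq
            have hqa := ((memS _ a q).1 (hsub hq)).2.2
            exact (memS _ _ q).2 ⟨hqi, hpq, le_inf hqa hqb⟩
        have hle : (⟨(S (pI i) b).card, Nat.lt_succ_of_le (cardle i b)⟩ : Fin _)
            ≤ ⟨(S (pI i) a).card, Nat.lt_succ_of_le (cardle i a)⟩ :=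
          Fin.mk_le_mk.2 (Finset.card_le_card hsub)
        show (⟨(S (pI i) (a ⊓ b)).card, _⟩ : Fin _) = _ ⊓ _
        rw [inf_eq_right.2 hle]
        exact Fin.ext (congrArg Finset.card hSeq)
    -- sdiff
    · intro a b
      funext i
      by_cases hsub : S (pI i) a ⊆ S (pI i) b
      · -- difference is empty
        have hSeq : S (pI i) (a \ b) = ∅ := by
          rw [Finset.eq_empty_iff_forall_notMem]
          intro q hq
          obtain ⟨hqi, hpq, hqd⟩ := (memS _ _ q).1 hq
          obtain ⟨m, hm, hqm, hmx, hmy⟩ := aux_claim hqi hqd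
          exact hmy (((memS _ b m).1 (hsub ((memS _ a m).2 ⟨hm, hpq.trans hqm, hmx⟩))).2.2)
        have hle : (⟨(S (pI i) a).card, Nat.lt_succ_of_le (cardle i a)⟩ : Fin _)
            ≤ ⟨(S (pI i) b).card, Nat.lt_succ_of_le (cardle i b)⟩ :=
          Fin.mk_le_mk.2 (Finset.card_le_card hsub)
        show (⟨(S (pI i) (a \ b)).card, _⟩ : Fin _) = _ \ _
        rw [sdiff_eq_bot_iff.2 hle]
        apply Fin.ext
        show (S (pI i) (a \ b)).card = ((⊥ : Fin _) : ℕ)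
        rw [hSeq]
        rfl
      · -- difference equals S a
        obtain ⟨m, hma, hmb⟩ := Finset.not_subset.1 hsub
        obtain ⟨hmi, hpm, hmxa⟩ := (memS _ a m).1 hma
        have hmy : ¬ m ≤ b := fun h => hmb ((memS _ b m).2 ⟨hmi, hpm, h⟩)
        have hmd : m ≤ a \ b := by
          rcases hmi.supPrime.le_sup.1 (hmxa.trans le_sup_sdiff) with h | h
          · exact absurd h hmy
          · exact h
        have hSeq : S (pI i) (a \ b) = S (pI i) a := by
          apply Finset.Subset.antisymm
          · exact mono _ sdiff_le
          · intro q hq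
            obtain ⟨hqi, hpq, hqa⟩ := (memS _ a q).1 hq
            refine (memS _ _ q).2 ⟨hqi, hpq, ?_⟩
            rcases hqi.supPrime.le_sup.1 (hqa.trans le_sup_sdiff) with h | h
            · -- q ≤ b; compare q and m
              rcases aux_comparable hV6 (hpIirr i) hqi hmi hpq hpm with hc | hc
              · exact hc.trans hmd
              · exact absurd (hc.trans h) hmy
            · exact h
        have hsubba : S (pI i) b ⊆ S (pI i) a := by
          rcases nested (hpIirr i) a b with h | h
          · exact absurd h hsub
          · exact h
        have hlt : (S (pI i) b).card < (S (pI i) a).card :=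
          Finset.card_lt_card (Finset.ssubset_iff_of_subset hsubba |>.2 ⟨m, hma, hmb⟩)
        have hnle : ¬ (⟨(S (pI i) a).card, Nat.lt_succ_of_le (cardle i a)⟩ : Fin _)
            ≤ ⟨(S (pI i) b).card, Nat.lt_succ_of_le (cardle i b)⟩ := by
          rw [Fin.mk_le_mk]
          omega
        show (⟨(S (pI i) (a \ b)).card, _⟩ : Fin _) = _ \ _
        rw [aux_lin_sdiff hnle]
        exact Fin.ext (congrArg Finset.card hSeq)
  · rintro ⟨n, k, f, hinj, hbot, htop, hsup, hinf, hsdiff⟩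
    intro x y
    apply hinj
    rw [hinf, hsdiff, hsdiff, hbot]
    funext i
    show (f x i \ f y i) ⊓ (f y i \ f x i) = ⊥
    rcases le_total (f x i) (f y i) with h | h
    · rw [sdiff_eq_bot_iff.2 h, bot_inf_eq]
    · rw [sdiff_eq_bot_iff.2 h, inf_bot_eq]
end

section
/- Let L be a finite co-Heyting algebra of dimension ≤ 1 (every join-irreducible element is maximal or minimal in the poset of join irreducibles), and let a ∈ L satisfy a = ⊤ \ (⊤ \ a) and a ≠ ⊥. Then there exists a finite co-Heyting algebra L' of dimension ≤ 1 containing L as a subalgebra and a nonzero b ∈ L' with b ≪ a. -/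
/-- Every join-irreducible element is maximal or minimal among join irreducibles
(dimension ≤ 1). -/
def DimLeOne (L : Type*) [CoheytingAlgebra L] : Prop :=
  ∀ x : L, SupIrred x →
    ((∀ y : L, SupIrred y → x ≤ y → x = y) ∨ (∀ y : L, SupIrred y → y ≤ x → y = x))

/-- There is an embedding `f` of `L` into `K` and a nonzero `b` in `K` with `b ≪ f a`. -/
def D3Ext (L : Type*) [CoheytingAlgebra L] (K : Type*) [CoheytingAlgebra K] (a : L) : Prop :=
  ∃ (f : L → K) (b : K), IsCoheytingEmb f ∧ b ≠ ⊥ ∧ Ll b (f a)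

section Aux

variable {L : Type*} [CoheytingAlgebra L] [Finite L]

private lemma le_of_forall_supIrred_le {a b : L}
    (h : ∀ s : L, SupIrred s → s ≤ a → s ≤ b) : a ≤ b := by
  obtain ⟨s, hs, hirr⟩ := exists_supIrred_decomposition a
  rw [← hs]
  exact Finset.sup_le fun q hq =>
    h q (hirr hq) (hs ▸ Finset.le_sup (f := id) hq)

private lemma not_le_sdiff {p y z : L} (hp : SupIrred p)
    (hmax : ∀ q : L, SupIrred q → p ≤ q → p = q) (hpy : p ≤ y) : ¬ p ≤ z \ y := by
  classical
  intro h
  obtain ⟨s, hs, hirr⟩ := exists_supIrred_decomposition (z \ y)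
  set c := (s.erase p).sup id with hc
  have hzy : z \ y ≤ y ⊔ c := by
    rw [← hs]
    refine Finset.sup_le fun q hq => ?_
    by_cases hqp : q = p
    · subst hqp; exact le_sup_of_le_left hpy
    · exact le_sup_of_le_right (Finset.le_sup (f := id) (Finset.mem_erase.2 ⟨hqp, hq⟩))
  have hz2 : z \ y ≤ c := by
    rw [sdiff_le_iff]
    calc z ≤ y ⊔ z \ y := le_sup_sdiff
    _ ≤ y ⊔ (y ⊔ c) := sup_le_sup_left hzy _
    _ = y ⊔ c := by rw [← sup_assoc, sup_idem]
  obtain ⟨q, hq, hpq⟩ := hp.supPrime.le_finset_sup.1 (h.trans hz2)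
  have heq : p = q := hmax q (hirr (Finset.mem_of_mem_erase hq)) hpq
  exact (Finset.mem_erase.1 hq).1 heq.symm

private lemma le_sdiff_iff' {p x y : L} (hp : SupIrred p)
    (hmax : ∀ q : L, SupIrred q → p ≤ q → p = q) :
    p ≤ x \ y ↔ p ≤ x ∧ ¬ p ≤ y := by
  constructor
  · intro h
    exact ⟨h.trans sdiff_le, fun hpy => not_le_sdiff hp hmax hpy h⟩
  · rintro ⟨hx, hy⟩
    exact (hp.supPrime.2 (hx.trans le_sup_sdiff)).resolve_left hy

private lemma prop_le {s t : Prop} (h : s → t) : s ≤ t := h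

private lemma prop_le' {s t : Prop} (h : s ≤ t) : s → t := h

private lemma psup {p : L} (hp : SupIrred p) :
    ∀ ⦃x y : L × Prop⦄, (p ≤ x.1 → x.2) → (p ≤ y.1 → y.2) →
      (p ≤ (x ⊔ y).1 → (x ⊔ y).2) := by
  intro x y hx hy h
  have h1 : p ≤ x.1 ⊔ y.1 := by simpa using h
  have h2 : (x ⊔ y).2 = (x.2 ∨ y.2) := by
    rw [Prod.snd_sup]; simp [sup_Prop_eq]
  rw [h2]
  rcases hp.supPrime.2 h1 with h' | h'
  · exact Or.inl (hx h')
  · exact Or.inr (hy h')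

private lemma pinf {p : L} :
    ∀ ⦃x y : L × Prop⦄, (p ≤ x.1 → x.2) → (p ≤ y.1 → y.2) →
      (p ≤ (x ⊓ y).1 → (x ⊓ y).2) := by
  intro x y hx hy h
  have h1 : p ≤ x.1 ⊓ y.1 := by simpa using h
  have h2 : (x ⊓ y).2 = (x.2 ∧ y.2) := by
    rw [Prod.snd_inf]; simp [inf_Prop_eq]
  rw [h2]
  exact ⟨hx (h1.trans inf_le_left), hy (h1.trans inf_le_right)⟩

/-- The extension type: lower sets of the poset of `L` with one new point added
below the maximal join-irreducible `p`. -/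
private noncomputable def ExtSdiff (p : L) (hp : SupIrred p)
    (hmax : ∀ q : L, SupIrred q → p ≤ q → p = q)
    (A B : {z : L × Prop // p ≤ z.1 → z.2}) : {z : L × Prop // p ≤ z.1 → z.2} :=
  ⟨(A.1.1 \ B.1.1, (A.1.2 ∧ ¬ B.1.2) ∨ (p ≤ A.1.1 ∧ ¬ p ≤ B.1.1)),
    fun h => Or.inr ((le_sdiff_iff' hp hmax).1 h)⟩

private noncomputable def ExtTop (p : L) : {z : L × Prop // p ≤ z.1 → z.2} := ⟨(⊤, True), fun _ => trivial⟩

private noncomputable def extCH (p : L) (hp : SupIrred p)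
    (hmax : ∀ q : L, SupIrred q → p ≤ q → p = q) :
    CoheytingAlgebra {z : L × Prop // p ≤ z.1 → z.2} :=
  letI : Lattice {z : L × Prop // p ≤ z.1 → z.2} := Subtype.lattice (psup hp) (pinf (p := p))
  { top := ExtTop p
    le_top := fun A =>
      Subtype.coe_le_coe.1 (Prod.le_def.2 ⟨le_top, prop_le fun _ => trivial⟩)
    bot := ⟨(⊥, False), fun h => absurd (le_bot_iff.1 h) hp.ne_bot⟩
    bot_le := fun A =>
      Subtype.coe_le_coe.1 (Prod.le_def.2 ⟨bot_le, prop_le False.elim⟩)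
    sdiff := ExtSdiff p hp hmax
    hnot := fun A => ExtSdiff p hp hmax (ExtTop p) A
    top_sdiff := fun A => rfl
    sdiff_le_iff := by
      intro A B C
      obtain ⟨⟨x, t⟩, hA⟩ := A
      obtain ⟨⟨y, s⟩, hB⟩ := B
      obtain ⟨⟨z, w⟩, hC⟩ := C
      show (ExtSdiff p hp hmax ⟨(x, t), hA⟩ ⟨(y, s), hB⟩) ≤ ⟨(z, w), hC⟩ ↔
        (⟨(x, t), hA⟩ : {z : L × Prop // p ≤ z.1 → z.2}) ≤ ⟨(y, s), hB⟩ ⊔ ⟨(z, w), hC⟩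
      rw [← Subtype.coe_le_coe, ← Subtype.coe_le_coe, Prod.le_def, Prod.le_def]
      constructor
      · rintro ⟨h1, h2⟩
        refine ⟨sdiff_le_iff.1 h1, prop_le fun ht => ?_⟩
        by_cases hs : s
        · exact Or.inl hs
        · exact Or.inr (prop_le' h2 (Or.inl ⟨ht, hs⟩))
      · rintro ⟨h1, h2⟩
        refine ⟨sdiff_le_iff.2 (h1 : x ≤ y ⊔ z), prop_le ?_⟩
        rintro (⟨ht, hs⟩ | ⟨hpx, hpy⟩)
        · exact ((prop_le' h2 ht).resolve_left hs : w)
        · rcases hp.supPrime.2 (hpx.trans (h1 : x ≤ y ⊔ z)) with h' | h'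
          · exact absurd h' hpy
          · exact hC h' }

end Aux

section Transfer

/-- Transfer a co-Heyting algebra structure along an equivalence. -/
private noncomputable def transferLattice {M : Type} {K : Type*} [Lattice K] (e : M ≃ K) :
    Lattice M where
  le a b := e a ≤ e b
  le_refl a := le_refl (e a)
  le_trans a b c h1 h2 := le_trans h1 h2
  le_antisymm a b h1 h2 := e.injective (le_antisymm h1 h2)
  sup a b := e.symm (e a ⊔ e b)
  le_sup_left a b := by
    show e a ≤ e (e.symm _); rw [e.apply_symm_apply]; exact le_sup_left
  le_sup_right a b := by
    show e b ≤ e (e.symm _); rw [e.apply_symm_apply]; exact le_sup_right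
  sup_le a b c h1 h2 := by
    show e (e.symm _) ≤ e c; rw [e.apply_symm_apply]; exact sup_le h1 h2
  inf a b := e.symm (e a ⊓ e b)
  inf_le_left a b := by
    show e (e.symm _) ≤ e a; rw [e.apply_symm_apply]; exact inf_le_left
  inf_le_right a b := by
    show e (e.symm _) ≤ e b; rw [e.apply_symm_apply]; exact inf_le_right
  le_inf a b c h1 h2 := by
    show e a ≤ e (e.symm _); rw [e.apply_symm_apply]; exact le_inf h1 h2

private noncomputable def transferCH {M : Type} {K : Type*} [CoheytingAlgebra K] (e : M ≃ K) :
    CoheytingAlgebra M :=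
  letI : Lattice M := transferLattice e
  { bot := e.symm ⊥
    bot_le := fun a => by show e (e.symm _) ≤ e a; rw [e.apply_symm_apply]; exact bot_le
    top := e.symm ⊤
    le_top := fun a => by show e a ≤ e (e.symm _); rw [e.apply_symm_apply]; exact le_top
    sdiff := fun a b => e.symm (e a \ e b)
    hnot := fun a => e.symm (⊤ \ e a)
    sdiff_le_iff := fun a b c => by
      show e (e.symm _) ≤ e c ↔ e a ≤ e (e.symm _)
      rw [e.apply_symm_apply, e.apply_symm_apply]
      exact sdiff_le_iff
    top_sdiff := fun a => by
      show e.symm (e (e.symm ⊤) \ e a) = e.symm (⊤ \ e a)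
      rw [e.apply_symm_apply] }

private structure Wrap (n : ℕ) : Type where
  down : Fin n

private def wrapEquiv (n : ℕ) : Wrap n ≃ Fin n :=
  ⟨Wrap.down, Wrap.mk, fun _ => rfl, fun _ => rfl⟩

private lemma shrink {L : Type*} [CoheytingAlgebra L] {a : L}
    {K : Type*} [instK : CoheytingAlgebra K] [Finite K]
    (hdimK : DimLeOne K) (hD : D3Ext L K a) :
    ∃ (L' : Type) (inst : CoheytingAlgebra L'),
      Finite L' ∧ @DimLeOne L' inst ∧ @D3Ext L _ L' inst a := by
  obtain ⟨n, ⟨e0⟩⟩ := Finite.exists_equiv_fin K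
  let e : Wrap n ≃ K := (wrapEquiv n).trans e0.symm
  letI instM : CoheytingAlgebra (Wrap n) := transferCH e
  haveI : Finite (Wrap n) := Finite.of_equiv (Fin n) (wrapEquiv n).symm
  have mle : ∀ u v : Wrap n, u ≤ v ↔ e u ≤ e v := fun _ _ => Iff.rfl
  have msup : ∀ u v : Wrap n, e (u ⊔ v) = e u ⊔ e v := fun u v => e.apply_symm_apply _
  have minf : ∀ u v : Wrap n, e (u ⊓ v) = e u ⊓ e v := fun u v => e.apply_symm_apply _
  have msdiff : ∀ u v : Wrap n, e (u \ v) = e u \ e v := fun u v => e.apply_symm_apply _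
  have mbot : e (⊥ : Wrap n) = ⊥ := e.apply_symm_apply _
  have mtop : e (⊤ : Wrap n) = ⊤ := e.apply_symm_apply _
  have hirr : ∀ u : Wrap n, SupIrred u ↔ SupIrred (e u) := by
    intro u
    constructor
    · rintro ⟨h1, h2⟩
      refine ⟨fun hm => h1 fun b hb => ?_, fun b c hbc => ?_⟩
      · exact (mle _ _).2 (hm ((mle _ _).1 hb))
      · rcases h2 (b := e.symm b) (c := e.symm c)
          (e.injective (by rw [msup, e.apply_symm_apply, e.apply_symm_apply, hbc])) with h | h
        · exact Or.inl (by rw [← h, e.apply_symm_apply])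
        · exact Or.inr (by rw [← h, e.apply_symm_apply])
    · rintro ⟨h1, h2⟩
      refine ⟨fun hm => h1 fun b hb => ?_, fun b c hbc => ?_⟩
      · have := hm (b := e.symm b) ((mle _ _).2 (by rwa [e.apply_symm_apply]))
        rw [mle, e.apply_symm_apply] at this; exact this
      · rcases h2 (b := e b) (c := e c) (by rw [← msup, hbc]) with h | h
        · exact Or.inl (e.injective h)
        · exact Or.inr (e.injective h)
  have hdimM : DimLeOne (Wrap n) := by
    intro u hu
    rcases hdimK (e u) ((hirr u).1 hu) with h | h
    · exact Or.inl fun v hv huv => e.injective (h (e v) ((hirr v).1 hv) huv)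
    · exact Or.inr fun v hv hvu => e.injective (h (e v) ((hirr v).1 hv) hvu)
  obtain ⟨f, b, ⟨hinj, hbot, htop, hsup, hinf, hsd⟩, hb, hll1, hll2⟩ := hD
  refine ⟨Wrap n, instM, inferInstance, hdimM, e.symm ∘ f, e.symm b, ⟨?_, ?_, ?_, ?_, ?_, ?_⟩, ?_, ?_, ?_⟩
  · exact e.symm.injective.comp hinj
  · show e.symm (f ⊥) = e.symm ⊥; rw [hbot]
  · show e.symm (f ⊤) = e.symm ⊤; rw [htop]
  · intro x y
    show e.symm (f (x ⊔ y)) = e.symm (e (e.symm (f x)) ⊔ e (e.symm (f y)))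
    rw [hsup, e.apply_symm_apply, e.apply_symm_apply]
  · intro x y
    show e.symm (f (x ⊓ y)) = e.symm (e (e.symm (f x)) ⊓ e (e.symm (f y)))
    rw [hinf, e.apply_symm_apply, e.apply_symm_apply]
  · intro x y
    show e.symm (f (x \ y)) = e.symm (e (e.symm (f x)) \ e (e.symm (f y)))
    rw [hsd, e.apply_symm_apply, e.apply_symm_apply]
  · intro h
    exact hb (e.symm.injective h)
  · show e.symm (e (e.symm (f a)) \ e (e.symm b)) = e.symm (f a)
    rw [e.apply_symm_apply, e.apply_symm_apply, hll1]
  · show e (e.symm b) ≤ e (e.symm (f a))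
    rw [e.apply_symm_apply, e.apply_symm_apply]; exact hll2

end Transfer

theorem density_extension_exists_dim_le_one (L : Type*) [CoheytingAlgebra L] [Finite L]
    (hdim : DimLeOne L) (a : L) (h1 : a = ⊤ \ (⊤ \ a)) (h2 : a ≠ ⊥) :
    ∃ (L' : Type) (inst : CoheytingAlgebra L'),
      Finite L' ∧ @DimLeOne L' inst ∧ @D3Ext L _ L' inst a := by
  classical
  by_cases hc : ∃ q r : L, SupIrred q ∧ SupIrred r ∧ q < r ∧ r ≤ a
  · -- Case 1: `a` contains a non-maximal point, so a suitable `b` exists in `L` itself.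
    obtain ⟨q, r, hq, hr, hqr, hra⟩ := hc
    have hr' : r ≤ a \ q :=
      (hr.supPrime.2 (hra.trans le_sup_sdiff)).resolve_left
        (fun h => absurd (hqr.trans_le h) (lt_irrefl q))
    have hsd : a \ q = a := by
      refine le_antisymm sdiff_le (le_of_forall_supIrred_le fun s hs hsa => ?_)
      rcases hs.supPrime.2 (hsa.trans le_sup_sdiff) with h | h
      · exact (h.trans hqr.le).trans hr'
      · exact h
    have hD : D3Ext L L a :=
      ⟨id, q, ⟨Function.injective_id, rfl, rfl, fun _ _ => rfl, fun _ _ => rfl, fun _ _ => rfl⟩,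
        hq.ne_bot, hsd, hqr.le.trans hra⟩
    exact shrink hdim hD
  · -- Case 2: all join irreducibles below `a` are maximal in `a`.
    have hnostrict : ∀ q r : L, SupIrred q → SupIrred r → q < r → ¬ r ≤ a := by
      intro q r hq hr hlt hra
      exact hc ⟨q, r, hq, hr, hlt, hra⟩
    have hP : ∃ p : L, SupIrred p ∧ p ≤ a ∧ ∀ q, SupIrred q → p ≤ q → q ≤ a := by
      by_contra hno
      push_neg at hno
      have htop : (⊤ : L) ≤ ⊤ \ a := by
        refine le_of_forall_supIrred_le fun s hs _ => ?_
        by_cases hsa : s ≤ a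
        · obtain ⟨q, hq, hsq, hqa⟩ := hno s hs hsa
          exact hsq.trans ((hq.supPrime.2 (le_top.trans le_sup_sdiff)).resolve_left hqa)
        · exact (hs.supPrime.2 (le_top.trans le_sup_sdiff)).resolve_left hsa
      exact h2 (by rw [h1, top_le_iff.1 htop, sdiff_self])
    obtain ⟨p, hp, hpa, hup⟩ := hP
    have hmax : ∀ q : L, SupIrred q → p ≤ q → p = q := by
      intro q hq hpq
      by_contra hne
      exact hnostrict p q hp hq (lt_of_le_of_ne hpq hne) (hup q hq hpq)
    -- Build the extension `K`.
    letI instK : CoheytingAlgebra {z : L × Prop // p ≤ z.1 → z.2} := extCH p hp hmax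
    -- basic computation lemmas about `{z : L × Prop // p ≤ z.1 → z.2}`
    have leK : ∀ u v : {z : L × Prop // p ≤ z.1 → z.2}, u ≤ v ↔ u.1.1 ≤ v.1.1 ∧ (u.1.2 → v.1.2) := by
      intro u v
      rw [← Subtype.coe_le_coe, Prod.le_def]
      exact and_congr Iff.rfl ⟨fun h => prop_le' h, fun h => prop_le h⟩
    have eqK : ∀ u v : {z : L × Prop // p ≤ z.1 → z.2}, u = v ↔ u.1.1 = v.1.1 ∧ (u.1.2 ↔ v.1.2) := by
      intro u v
      rw [← Subtype.coe_inj, Prod.ext_iff]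
      exact and_congr Iff.rfl ⟨fun h => h ▸ Iff.rfl, fun h => propext h⟩
    have supK1 : ∀ u v : {z : L × Prop // p ≤ z.1 → z.2}, (u ⊔ v).1.1 = u.1.1 ⊔ v.1.1 := fun _ _ => rfl
    have supK2 : ∀ u v : {z : L × Prop // p ≤ z.1 → z.2}, (u ⊔ v).1.2 = (u.1.2 ∨ v.1.2) := by
      intro u v
      show (u.1 ⊔ v.1).2 = _
      rw [Prod.snd_sup]; simp [sup_Prop_eq]
    have botK1 : (⊥ : {z : L × Prop // p ≤ z.1 → z.2}).1.1 = ⊥ := rfl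
    have botK2 : (⊥ : {z : L × Prop // p ≤ z.1 → z.2}).1.2 = False := rfl
    have sdK1 : ∀ u v : {z : L × Prop // p ≤ z.1 → z.2}, (u \ v).1.1 = u.1.1 \ v.1.1 := fun _ _ => rfl
    have sdK2 : ∀ u v : {z : L × Prop // p ≤ z.1 → z.2},
        (u \ v).1.2 = ((u.1.2 ∧ ¬ v.1.2) ∨ (p ≤ u.1.1 ∧ ¬ p ≤ v.1.1)) := fun _ _ => rfl
    -- characterization of sup-irreducible elements of `{z : L × Prop // p ≤ z.1 → z.2}`
    have hchar : ∀ A : {z : L × Prop // p ≤ z.1 → z.2}, SupIrred A →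
        (A.1.1 = ⊥ ∧ A.1.2) ∨ (SupIrred A.1.1 ∧ (A.1.2 ↔ p ≤ A.1.1)) := by
      intro A hA
      by_cases hx : A.1.1 = ⊥
      · left
        refine ⟨hx, ?_⟩
        by_contra ht
        exact hA.ne_bot ((eqK _ _).2 ⟨by rw [hx, botK1], by rw [botK2]; exact iff_of_false ht not_false⟩)
      · right
        have hpt : A.1.2 → p ≤ A.1.1 := by
          intro ht
          by_contra hpx
          have hsplit : (⟨(A.1.1, False), fun h => hpx h⟩ : {z : L × Prop // p ≤ z.1 → z.2}) ⊔ ⟨(⊥, True), fun _ => trivial⟩ = A := by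
            refine (eqK _ _).2 ⟨?_, ?_⟩
            · rw [supK1]; exact sup_bot_eq _
            · rw [supK2]; exact iff_of_true (Or.inr trivial) ht
          rcases hA.2 hsplit with h | h
          · have := ((eqK _ _).1 h).2
            exact this.2 ht
          · exact hx (((eqK _ _).1 h).1.symm)
        refine ⟨⟨fun hm => hx (isMin_iff_eq_bot.1 hm), fun u v huv => ?_⟩,
          ⟨hpt, A.2⟩⟩
        have hsplit : (⟨(u, p ≤ u), fun h => h⟩ : {z : L × Prop // p ≤ z.1 → z.2}) ⊔ ⟨(v, p ≤ v), fun h => h⟩ = A := by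
          refine (eqK _ _).2 ⟨?_, ?_⟩
          · rw [supK1]; exact huv
          · rw [supK2]
            constructor
            · rintro (h | h)
              · exact A.2 (h.trans (huv ▸ le_sup_left))
              · exact A.2 (h.trans (huv ▸ le_sup_right))
            · intro ht
              exact hp.supPrime.2 (huv ▸ hpt ht)
        rcases hA.2 hsplit with h | h
        · exact Or.inl ((eqK _ _).1 h).1
        · exact Or.inr ((eqK _ _).1 h).1
    -- dimension ≤ 1 for {z : L × Prop // p ≤ z.1 → z.2}
    have hdimK : DimLeOne {z : L × Prop // p ≤ z.1 → z.2} := by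
      intro A hA
      rcases hchar A hA with ⟨hA1, hA2⟩ | ⟨hA1, hA2⟩
      · -- the new minimal point (or rather: A is the new atom)
        right
        intro B hB hBA
        rcases hchar B hB with ⟨hB1, hB2⟩ | ⟨hB1, _⟩
        · exact (eqK _ _).2 ⟨by rw [hB1, hA1], iff_of_true hB2 hA2⟩
        · exact absurd (le_bot_iff.1 (hA1 ▸ ((leK _ _).1 hBA).1)) hB1.ne_bot
      · by_cases hpx : p ≤ A.1.1
        · -- then A corresponds to p itself, which is maximal
          have hAp : A.1.1 = p := (hmax A.1.1 hA1 hpx).symm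
          left
          intro B hB hAB
          rcases hchar B hB with ⟨hB1, _⟩ | ⟨hB1, hB2⟩
          · exact absurd (le_bot_iff.1 (hB1 ▸ ((leK _ _).1 hAB).1)) hA1.ne_bot
          · have h1 : A.1.1 = B.1.1 := hmax B.1.1 hB1 (hpx.trans ((leK _ _).1 hAB).1) ▸ hAp
            exact (eqK _ _).2 ⟨h1, by rw [hA2, hB2, h1]⟩
        · rcases hdim A.1.1 hA1 with h | h
          · left
            intro B hB hAB
            rcases hchar B hB with ⟨hB1, _⟩ | ⟨hB1, hB2⟩
            · exact absurd (le_bot_iff.1 (hB1 ▸ ((leK _ _).1 hAB).1)) hA1.ne_bot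
            · have h1 : A.1.1 = B.1.1 := h B.1.1 hB1 ((leK _ _).1 hAB).1
              exact (eqK _ _).2 ⟨h1, by rw [hA2, hB2, h1]⟩
          · right
            intro B hB hBA
            rcases hchar B hB with ⟨hB1, hB2⟩ | ⟨hB1, hB2⟩
            · -- B is the new atom: then B.1.2 holds, so A.1.2 holds, so p ≤ A.1.1, contradiction
              exact absurd (hA2.1 (((leK _ _).1 hBA).2 hB2)) hpx
            · have h1 : B.1.1 = A.1.1 := h B.1.1 hB1 ((leK _ _).1 hBA).1
              exact (eqK _ _).2 ⟨h1, by rw [hA2, hB2, h1]⟩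
    -- the embedding and the new element b
    have hDK : D3Ext L {z : L × Prop // p ≤ z.1 → z.2} a := by
      refine ⟨fun x => ⟨(x, p ≤ x), fun h => h⟩, ⟨(⊥, True), fun _ => trivial⟩,
        ⟨?_, ?_, ?_, ?_, ?_, ?_⟩, ?_, ?_, ?_⟩
      · intro x y hxy
        exact (((eqK _ _).1 hxy).1 : x = y)
      · exact (eqK _ _).2 ⟨rfl, by rw [botK2]; exact iff_of_false (fun h => hp.ne_bot (le_bot_iff.1 h)) not_false⟩
      · exact (eqK _ _).2 ⟨rfl, iff_of_true le_top trivial⟩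
      · intro x y
        refine (eqK _ _).2 ⟨by rw [supK1], ?_⟩
        rw [supK2]
        exact hp.supPrime.le_sup
      · intro x y
        refine (eqK _ _).2 ⟨rfl, ?_⟩
        show _ ↔ ((x, p ≤ x) ⊓ (y, p ≤ y) : L × Prop).2
        rw [Prod.snd_inf]
        simp [inf_Prop_eq, le_inf_iff]
      · intro x y
        refine (eqK _ _).2 ⟨by rw [sdK1], ?_⟩
        rw [sdK2]
        show p ≤ x \ y ↔ _
        rw [le_sdiff_iff' hp hmax]
        constructor
        · exact fun h => Or.inr h
        · rintro (⟨h1, h2⟩ | h); exact ⟨h1, h2⟩; exact h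
      · intro h
        have := ((eqK _ _).1 h).2
        rw [botK2] at this
        exact this.1 trivial
      · refine (eqK _ _).2 ⟨?_, ?_⟩
        · rw [sdK1]; exact sdiff_bot
        · rw [sdK2]
          exact iff_of_true (Or.inr ⟨hpa, fun h => hp.ne_bot (le_bot_iff.1 h)⟩) hpa
      · exact (leK _ _).2 ⟨bot_le, fun _ => hpa⟩
    exact shrink hdimK hDK
end
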